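/- Let Δ be the simplex category of nonempty finite linearly ordered sets and order-preserving maps, and let Δ_inj ⊆ Δ be the wide subcategory with the same objects but only injective order-preserving maps. Then the inclusion functor Δ_inj → Δ is initial (cofinal for limits): for any cosimplicial object X: Δ → D in a category D, the limit of X over Δ exists if and only if the limit of the restriction of X to Δ_inj exists, and in that case they agree. -/

import Mathlib

open CategoryTheory Limits MorphismProperty

universe v u

/-- The inclusion `Δ_inj → Δ` of the wide subcategory of the simplex category with the
same objects but only the injective order-preserving maps (the monomorphisms). -/
noncomputable def simplexInjInclusion :
    WideSubcategory (monomorphisms SimplexCategory) ⥤ SimplexCategory :=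
  wideSubcategoryInclusion (monomorphisms SimplexCategory)

lemma mono_from_zero {m : SimplexCategory} (f : SimplexCategory.mk 0 ⟶ m) :
    monomorphisms SimplexCategory f :=
  SimplexCategory.mono_iff_injective.mpr fun a b _ => by
    have ha : (a : ℕ) < 1 := a.isLt
    have hb : (b : ℕ) < 1 := b.isLt
    exact Fin.ext (by omega)

instance simplexInjInclusion_initial : simplexInjInclusion.Initial := by
  constructor
  intro n
  -- the object `([n], 𝟙 n)`
  let top : CostructuredArrow simplexInjInclusion n :=
    CostructuredArrow.mk (Y := ⟨n⟩) (show simplexInjInclusion.obj ⟨n⟩ ⟶ n from 𝟙 n)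
  -- for each object `j`, a vertex object `([0], ...)` mapping to both `j` and `top`
  let v : ∀ _ : CostructuredArrow simplexInjInclusion n,
      CostructuredArrow simplexInjInclusion n := fun j =>
    CostructuredArrow.mk (Y := ⟨SimplexCategory.mk 0⟩)
      (show simplexInjInclusion.obj ⟨SimplexCategory.mk 0⟩ ⟶ n from SimplexCategory.const (SimplexCategory.mk 0) j.left.obj 0 ≫ j.hom)
  have hv₁ : ∀ j, Nonempty ((v j) ⟶ j) := fun j =>
    ⟨CostructuredArrow.homMk
      (⟨SimplexCategory.const (SimplexCategory.mk 0) j.left.obj 0, mono_from_zero _⟩ :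
        (v j).left ⟶ j.left) rfl⟩
  have hv₂ : ∀ j, Nonempty ((v j) ⟶ top) := fun j =>
    ⟨CostructuredArrow.homMk
      (⟨SimplexCategory.const (SimplexCategory.mk 0) j.left.obj 0 ≫ j.hom, mono_from_zero _⟩ :
        (v j).left ⟶ top.left) (by simp [top, v, simplexInjInclusion]; rfl)⟩
  have : Nonempty (CostructuredArrow simplexInjInclusion n) := ⟨top⟩
  apply zigzag_isConnected
  intro j₁ j₂
  have z : ∀ j, Zigzag j top := fun j =>
    Relation.ReflTransGen.tail (Relation.ReflTransGen.single (Or.inr (hv₁ j))) (Or.inl (hv₂ j))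
  exact (z j₁).trans (zigzag_symmetric.symm _ _ (z j₂))

/-- The inclusion `Δ_inj ⊆ Δ` of the subcategory of injective order-preserving maps
into the simplex category is initial: for any cosimplicial object `X : Δ ⥤ D`, the
limit of `X` over `Δ` exists if and only if the limit of the restriction of `X` to
`Δ_inj` exists, and in that case they agree. -/
theorem statement15 :
    (simplexInjInclusion.Initial) ∧
    (∀ (D : Type u) [Category.{v} D] (X : SimplexCategory ⥤ D),
      HasLimit (simplexInjInclusion ⋙ X) ↔ HasLimit X) ∧
    (∀ (D : Type u) [Category.{v} D] (X : SimplexCategory ⥤ D)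
      [HasLimit X] [HasLimit (simplexInjInclusion ⋙ X)],
      Nonempty (limit (simplexInjInclusion ⋙ X) ≅ limit X)) := by
  refine ⟨inferInstance, ?_, ?_⟩
  · intro D _ X
    exact ⟨fun _ => Functor.Initial.hasLimit_of_comp simplexInjInclusion,
      fun _ => inferInstance⟩
  · intro D _ X _ _
    exact ⟨Functor.Initial.limitIso simplexInjInclusion X⟩
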